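/- If G is a finite group without abelian normal subgroups and N is a normal subgroup of G, then the socle of N equals the intersection of the socle of G with N, i.e., Soc(N) = Soc(G) ∩ N. -/

import Mathlib

def IsMinimalNormal {G : Type*} [Group G] (N : Subgroup G) : Prop :=
  N ≠ ⊥ ∧ N.Normal ∧ ∀ M : Subgroup G, M.Normal → M ≤ N → M = ⊥ ∨ M = N

def socle (G : Type*) [Group G] : Subgroup G :=
  ⨆ N ∈ {N : Subgroup G | IsMinimalNormal N}, N

def FittingFree (G : Type*) [Group G] : Prop :=
  ∀ N : Subgroup G, N.Normal → IsMulCommutative N → N = ⊥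

section helpers

variable {G : Type*} [Group G]

lemma exists_minimalNormal [Finite G] {K : Subgroup G} (hK : K.Normal) (h : K ≠ ⊥) :
    ∃ M : Subgroup G, IsMinimalNormal M ∧ M ≤ K := by
  have : Finite (Subgroup G) := inferInstance
  obtain ⟨M, hM, hmin⟩ := (Set.toFinite
    {M : Subgroup G | M.Normal ∧ M ≠ ⊥ ∧ M ≤ K}).exists_minimal ⟨K, hK, h, le_rfl⟩
  refine ⟨M, ⟨hM.2.1, hM.1, fun M' hM'n hM'le => ?_⟩, hM.2.2⟩
  by_cases hb : M' = ⊥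
  · exact Or.inl hb
  · exact Or.inr (le_antisymm hM'le (hmin ⟨hM'n, hb, hM'le.trans hM.2.2⟩ hM'le))

lemma minimal_le_socle {M : Subgroup G} (hM : IsMinimalNormal M) : M ≤ socle G :=
  le_iSup₂ (f := fun (N : Subgroup G) (_ : N ∈ {N : Subgroup G | IsMinimalNormal N}) => N) M hM

lemma socle_normal_aux {s : Set (Subgroup G)} (h : ∀ T ∈ s, T.Normal) :
    (⨆ T ∈ s, T).Normal := by
  constructor
  intro x hx g
  rw [iSup_subtype'] at hx ⊢
  refine Subgroup.iSup_induction (C := fun y => g * y * g⁻¹ ∈ ⨆ T : s, (T : Subgroup G)) _ hx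
    (fun ⟨T, hT⟩ x hxT => ?_) (by simpa using one_mem _) ?_
  · exact Subgroup.mem_iSup_of_mem ⟨T, hT⟩ ((h T hT).conj_mem x hxT g)
  · intro x y hx hy
    have hxy : g * (x * y) * g⁻¹ = (g * x * g⁻¹) * (g * y * g⁻¹) := by group
    rw [hxy]; exact mul_mem hx hy

instance socle_normal : (socle G).Normal :=
  socle_normal_aux (fun _ hT => hT.2.1)

end helpers

section more
variable {G : Type*} [Group G]

lemma centralizer_normal {K : Subgroup G} (hK : K.Normal) :
    (Subgroup.centralizer (K : Set G)).Normal := by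
  constructor
  intro c hc g
  rw [Subgroup.mem_centralizer_iff] at hc ⊢
  intro s hs
  have h1 : g⁻¹ * s * g ∈ K := by simpa using hK.conj_mem s hs g⁻¹
  have := hc _ h1
  -- (g⁻¹ s g) c = c (g⁻¹ s g)  ⟹  s (g c g⁻¹) = (g c g⁻¹) s
  have : s * (g * c * g⁻¹) = (g * c * g⁻¹) * s := by
    have e := congrArg (fun x => g * x * g⁻¹) this
    simpa [mul_assoc] using e
  exact this

lemma centralizer_socle_eq_bot [Finite G] (hG : FittingFree G) :
    Subgroup.centralizer ((socle G : Subgroup G) : Set G) = ⊥ := by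
  by_contra h
  have hCn : (Subgroup.centralizer ((socle G : Subgroup G) : Set G)).Normal :=
    centralizer_normal socle_normal
  obtain ⟨M, hM, hMle⟩ := exists_minimalNormal hCn h
  have hMsoc : M ≤ socle G := minimal_le_socle hM
  have hcomm : IsMulCommutative M := by
    constructor; constructor
    intro a b
    ext
    show (a : G) * b = (b : G) * a
    exact hMle b.2 a (hMsoc a.2)
  exact hM.1 (hG M hM.2.1 hcomm)

lemma isMinimalNormal_map {H K : Type*} [Group H] [Group K] (e : H ≃* K)
    {M : Subgroup H} (hM : IsMinimalNormal M) :
    IsMinimalNormal (M.map e.toMonoidHom) := by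
  obtain ⟨hbot, hnorm, hmin⟩ := hM
  refine ⟨?_, hnorm.map _ e.surjective, ?_⟩
  · rw [Ne, M.map_eq_bot_iff_of_injective (f := e.toMonoidHom) (by exact e.injective)]
    exact hbot
  · intro M' hM'n hM'le
    have h1 : M'.map e.symm.toMonoidHom ≤ M := by
      intro x hx
      obtain ⟨y, hy, rfl⟩ := hx
      obtain ⟨z, hz, hze⟩ := hM'le hy
      simpa [← hze] using hz
    rcases hmin _ (hM'n.map _ e.symm.surjective) h1 with h | h
    · left
      rwa [M'.map_eq_bot_iff_of_injective (f := e.symm.toMonoidHom)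
        (by exact e.symm.injective)] at h
    · right
      have := congrArg (Subgroup.map e.toMonoidHom) h
      rwa [Subgroup.map_map,
        show e.toMonoidHom.comp e.symm.toMonoidHom = MonoidHom.id K by ext x; simp,
        Subgroup.map_id] at this

end more

section dir1
variable {G : Type*} [Group G]

/-- Commutator of elements of two normal subgroups lies in both. -/
lemma comm_of_disjoint_normal {T N : Subgroup G} (hT : T.Normal) (hN : N.Normal)
    (h : T ⊓ N = ⊥) {t n : G} (ht : t ∈ T) (hn : n ∈ N) : t * n = n * t := by
  have hu : t * n * t⁻¹ * n⁻¹ ∈ T ⊓ N := by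
    constructor
    · have : t * (n * t⁻¹ * n⁻¹) ∈ T := mul_mem ht (by simpa [mul_assoc] using hT.conj_mem t⁻¹ (T.inv_mem ht) n)
      simpa [mul_assoc] using this
    · exact mul_mem (hN.conj_mem n hn t) (N.inv_mem hn)
  rw [h, Subgroup.mem_bot] at hu
  have : t * n = n * t := by
    have := congrArg (fun x => x * n * t) hu
    simpa [mul_assoc] using this
  exact this

lemma mapMinimal_le_socle [Finite G] (hG : FittingFree G)
    {N : Subgroup G} (hN : N.Normal) {M : Subgroup ↥N} (hM : IsMinimalNormal M) :
    M.map N.subtype ≤ socle G := by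
  have hSnorm : (socle G).Normal := socle_normal
  have hK : (M ⊓ (socle G).subgroupOf N).Normal :=
    @Subgroup.normal_inf_normal _ _ _ _ hM.2.1 (hSnorm.comap N.subtype)
  rcases hM.2.2 _ hK inf_le_left with h | h
  · exfalso
    have hcent : M.map N.subtype ≤ Subgroup.centralizer ((socle G : Subgroup G) : Set G) := by
      rw [Subgroup.le_centralizer_iff]
      show (⨆ T ∈ {T : Subgroup G | IsMinimalNormal T}, T) ≤ _
      refine iSup₂_le fun T hT => ?_
      obtain ⟨hTbot, hTnorm, hTmin⟩ := hT
      rcases hTmin (T ⊓ N) (@Subgroup.normal_inf_normal _ _ _ _ hTnorm hN) inf_le_left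
        with hTN | hTN
      · -- T ⊓ N = ⊥ : T centralizes N ⊇ map M
        intro t ht
        rw [Subgroup.mem_centralizer_iff]
        intro m hm
        exact (comm_of_disjoint_normal hTnorm hN hTN ht
          (Subgroup.map_subtype_le M hm)).symm
      · -- T ≤ N
        have hTleN : T ≤ N := hTN ▸ inf_le_right
        have hTS : T ≤ socle G := minimal_le_socle ⟨hTbot, hTnorm, hTmin⟩
        have hdisj : T.subgroupOf N ⊓ M = ⊥ := by
          rw [← le_bot_iff, ← h]
          exact le_inf (fun x hx => hx.2) (fun x hx => Subgroup.mem_subgroupOf.mpr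
            (hTS (Subgroup.mem_subgroupOf.mp hx.1)))
        intro t ht
        rw [Subgroup.mem_centralizer_iff]
        intro m hm
        obtain ⟨mbar, hmbar, rfl⟩ := hm
        have key : (⟨t, hTleN ht⟩ : ↥N) * mbar = mbar * ⟨t, hTleN ht⟩ :=
          comm_of_disjoint_normal (hTnorm.comap N.subtype) hM.2.1 hdisj
            (Subgroup.mem_subgroupOf.mpr ht) hmbar
        have := congrArg (N.subtype) key
        simpa using this.symm
    rw [centralizer_socle_eq_bot hG, le_bot_iff,
      M.map_eq_bot_iff_of_injective (f := N.subtype) N.subtype_injective] at hcent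
    exact hM.1 hcent

  · have hle : M ≤ (socle G).subgroupOf N := h ▸ inf_le_right
    exact (Subgroup.gc_map_comap N.subtype).l_le hle

end dir1

section dir2
variable {G : Type*} [Group G]

lemma map_socle_le {H K : Type*} [Group H] [Group K] (e : H ≃* K) :
    (socle H).map e.toMonoidHom ≤ socle K := by
  refine (Subgroup.gc_map_comap e.toMonoidHom).l_le ?_
  refine iSup₂_le fun M hM => (Subgroup.gc_map_comap e.toMonoidHom).le_u ?_
  exact minimal_le_socle (isMinimalNormal_map e hM)

lemma map_socle_normal {N : Subgroup G} (hN : N.Normal) :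
    ((socle ↥N).map N.subtype).Normal := by
  haveI := hN
  constructor
  intro p hp g
  obtain ⟨x, hx, rfl⟩ := hp
  refine ⟨(MulAut.conjNormal g : MulAut ↥N) x,
    map_socle_le (MulAut.conjNormal g : MulAut ↥N) ⟨x, hx, rfl⟩, ?_⟩
  simp [MulAut.conjNormal_apply]

lemma minNormal_le_mapSocle [Finite G] {N : Subgroup G} (hN : N.Normal)
    {T : Subgroup G} (hT : IsMinimalNormal T) (hTN : T ≤ N) :
    T ≤ (socle ↥N).map N.subtype := by
  have hTb : T.subgroupOf N ≠ ⊥ := by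
    rw [Ne, Subgroup.subgroupOf_eq_bot]
    intro hd
    exact hT.1 (le_bot_iff.mp (hd le_rfl hTN))
  obtain ⟨M, hM, hMle⟩ := exists_minimalNormal (hT.2.1.comap N.subtype) hTb
  haveI : ((socle ↥N).map N.subtype).Normal := map_socle_normal hN
  have h1 : (M.map N.subtype : Set G) ⊆ ((socle ↥N).map N.subtype : Subgroup G) :=
    SetLike.coe_subset_coe.mpr (Subgroup.map_mono (minimal_le_socle hM))
  have h2 : Subgroup.normalClosure (M.map N.subtype : Set G) ≤ (socle ↥N).map N.subtype :=
    Subgroup.normalClosure_le_normal h1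
  have h3 : Subgroup.normalClosure (M.map N.subtype : Set G) ≤ T := by
    haveI := hT.2.1
    refine Subgroup.normalClosure_le_normal ?_
    rintro x ⟨y, hy, rfl⟩
    exact Subgroup.mem_subgroupOf.mp (hMle hy)
  rcases hT.2.2 _ Subgroup.normalClosure_normal h3 with h4 | h4
  · exfalso
    have : M.map N.subtype = ⊥ := le_bot_iff.mp (h4 ▸
      ((Subgroup.subset_normalClosure (s := (M.map N.subtype : Set G))) : _ ≤ _))
    rw [M.map_eq_bot_iff_of_injective (f := N.subtype) N.subtype_injective] at this
    exact hM.1 this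
  · rw [← h4]; exact h2

end dir2

open scoped Pointwise in
theorem stmt1 {G : Type*} [Group G] [Finite G] (hG : FittingFree G)
    (N : Subgroup G) (hN : N.Normal) :
    (socle ↥N).map N.subtype = socle G ⊓ N := by
  apply le_antisymm
  · refine le_inf ?_ (Subgroup.map_subtype_le _)
    refine (Subgroup.gc_map_comap N.subtype).l_le ?_
    exact iSup₂_le fun M hM =>
      (Subgroup.gc_map_comap N.subtype).le_u (mapMinimal_le_socle hG hN hM)
  · set P := (socle ↥N).map N.subtype with hP
    set A := ⨆ T ∈ {T : Subgroup G | IsMinimalNormal T ∧ T ≤ N}, T with hA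
    set B := ⨆ T ∈ {T : Subgroup G | IsMinimalNormal T ∧ ¬ T ≤ N}, T with hB
    have hA_le_P : A ≤ P := iSup₂_le fun T hT => minNormal_le_mapSocle hN hT.1 hT.2
    have hA_le_N : A ≤ N := iSup₂_le fun T hT => hT.2
    have hAnorm : A.Normal := socle_normal_aux (fun T hT => hT.1.2.1)
    have hBnorm : B.Normal := socle_normal_aux (fun T hT => hT.1.2.1)
    have hBcent : B ≤ Subgroup.centralizer (N : Set G) := by
      refine iSup₂_le fun T hT => ?_
      obtain ⟨⟨hTbot, hTnorm, hTmin⟩, hTN⟩ := hT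
      have hTb : T ⊓ N = ⊥ := by
        rcases hTmin (T ⊓ N) (@Subgroup.normal_inf_normal _ _ _ _ hTnorm hN) inf_le_left
          with h | h
        · exact h
        · exact absurd (h ▸ inf_le_right) hTN
      intro t ht
      rw [Subgroup.mem_centralizer_iff]
      intro n hn
      exact (comm_of_disjoint_normal hTnorm hN hTb ht hn).symm
    have hBN : B ⊓ N = ⊥ := by
      refine hG _ (@Subgroup.normal_inf_normal _ _ _ _ hBnorm hN) ?_
      constructor; constructor
      intro a b
      ext
      show (a : G) * b = (b : G) * a
      exact (Subgroup.mem_centralizer_iff.mp (hBcent a.2.1) b b.2.2).symm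
    have hSup : socle G ≤ A ⊔ B := by
      refine iSup₂_le fun T hT => ?_
      by_cases hc : T ≤ N
      · exact le_trans (le_iSup₂ (f := fun (T : Subgroup G)
          (_ : T ∈ {T : Subgroup G | IsMinimalNormal T ∧ T ≤ N}) => T) T ⟨hT, hc⟩) le_sup_left
      · exact le_trans (le_iSup₂ (f := fun (T : Subgroup G)
          (_ : T ∈ {T : Subgroup G | IsMinimalNormal T ∧ ¬ T ≤ N}) => T) T ⟨hT, hc⟩) le_sup_right
    intro x hx
    have hxAB : x ∈ A ⊔ B := hSup hx.1
    haveI := hBnorm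
    have hxset : x ∈ ((A : Set G) * (B : Set G)) := by
      rw [← Subgroup.mul_normal A B]
      exact hxAB
    obtain ⟨a, ha, b, hb, rfl⟩ := hxset
    have hbN : b ∈ N := by
      have h := mul_mem (N.inv_mem (hA_le_N ha)) hx.2
      simpa [mul_assoc] using h
    have hbbot : b ∈ B ⊓ N := ⟨hb, hbN⟩
    rw [hBN, Subgroup.mem_bot] at hbbot
    subst hbbot
    simpa using hA_le_P ha
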